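/- The polynomial X⁴ − 2X³ + 4X − 2 is irreducible over ℚ, and consequently the field ℚ(s₃) ⊆ ℂ generated over ℚ by s₃ = (1 − √2·3^{1/4} − √3)/2 has degree 4 over ℚ (i.e., the finrank of IntermediateField.adjoin ℚ {s₃} over ℚ equals 4). -/

import Mathlib

open Polynomial

noncomputable def sThree : ℂ :=
  (1 - (Real.sqrt 2 : ℂ) * (((3 : ℝ) ^ ((1 : ℝ) / 4) : ℝ) : ℂ) - (Real.sqrt 3 : ℂ)) / 2

lemma real_key : ((1 - Real.sqrt 2 * (3:ℝ)^((1:ℝ)/4) - Real.sqrt 3)/2)^4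
    - 2*((1 - Real.sqrt 2 * (3:ℝ)^((1:ℝ)/4) - Real.sqrt 3)/2)^3
    + 4*((1 - Real.sqrt 2 * (3:ℝ)^((1:ℝ)/4) - Real.sqrt 3)/2) - 2 = 0 := by
  set a := Real.sqrt 2
  set b := (3:ℝ)^((1:ℝ)/4)
  set c := Real.sqrt 3
  have ha : a^2 = 2 := Real.sq_sqrt (by norm_num)
  have hc : c^2 = 3 := Real.sq_sqrt (by norm_num)
  have hb : b^2 = c := by
    rw [show c = (3:ℝ)^((1:ℝ)/2) by rw [← Real.sqrt_eq_rpow]]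
    rw [show b^2 = b^((2:ℕ):ℝ) from (Real.rpow_natCast b 2).symm]
    rw [← Real.rpow_mul (by norm_num)]
    norm_num
  linear_combination ((-3/8)*b^2 + (1/16)*a^2*b^4 + (1/4)*a*b^3*c + (3/8)*b^2*c^2 + (1/8)*b^2*c) * ha
    + (-3/4 + (1/8)*a^2*b^2 + (1/2)*a*b*c + (3/4)*c^2 + (1/4)*c) * hb
    + (1/16 + (1/4)*a*b*c + (1/16)*c^2 + (1/2)*a*b + (3/4)*c) * hc

lemma sThree_root : sThree^4 - 2*sThree^3 + 4*sThree - 2 = 0 := by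
  have h : sThree = (((1 - Real.sqrt 2 * (3:ℝ)^((1:ℝ)/4) - Real.sqrt 3)/2 : ℝ) : ℂ) := by
    unfold sThree; push_cast; ring
  rw [h]
  exact_mod_cast congrArg (Complex.ofReal) real_key

lemma zq_irr : Irreducible (X ^ 4 - 2 * X ^ 3 + 4 * X - 2 : ℤ[X]) := by
  set q : ℤ[X] := X ^ 4 - 2 * X ^ 3 + 4 * X - 2 with hq
  have hdeg : q.natDegree = 4 := by rw [hq]; compute_degree!
  have hmon : q.Monic := by rw [hq]; monicity!
  have hprime : (Ideal.span {(2:ℤ)} : Ideal ℤ).IsPrime := by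
    rw [Ideal.span_singleton_prime (by norm_num)]
    exact Int.prime_two
  have heis : q.IsEisensteinAt (Ideal.span {(2:ℤ)}) := by
    constructor
    · rw [hmon.leadingCoeff, Ideal.mem_span_singleton]
      norm_num
    · intro n hn
      rw [hdeg] at hn
      interval_cases n <;>
        simp [hq, Ideal.mem_span_singleton, coeff_one, coeff_X] <;> decide
    · rw [Ideal.span_singleton_pow, Ideal.mem_span_singleton]
      simp [hq, coeff_one, coeff_X]
  exact heis.irreducible hprime hmon.isPrimitive (by omega)

theorem stmt_6 :
    Irreducible (X ^ 4 - 2 * X ^ 3 + 4 * X - 2 : ℚ[X]) ∧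
    Module.finrank ℚ (IntermediateField.adjoin ℚ ({sThree} : Set ℂ)) = 4 := by
  have hmap : (X ^ 4 - 2 * X ^ 3 + 4 * X - 2 : ℤ[X]).map (Int.castRingHom ℚ)
      = (X ^ 4 - 2 * X ^ 3 + 4 * X - 2 : ℚ[X]) := by
    simp [Polynomial.map_sub, Polynomial.map_add, Polynomial.map_mul, Polynomial.map_pow]
  have hmonZ : (X ^ 4 - 2 * X ^ 3 + 4 * X - 2 : ℤ[X]).Monic := by monicity!
  have hirr : Irreducible (X ^ 4 - 2 * X ^ 3 + 4 * X - 2 : ℚ[X]) := by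
    rw [← hmap]
    exact ((Polynomial.IsPrimitive.Int.irreducible_iff_irreducible_map_cast
      hmonZ.isPrimitive).mp zq_irr)
  refine ⟨hirr, ?_⟩
  have hmonQ : (X ^ 4 - 2 * X ^ 3 + 4 * X - 2 : ℚ[X]).Monic := by monicity!
  have hroot : aeval sThree (X ^ 4 - 2 * X ^ 3 + 4 * X - 2 : ℚ[X]) = 0 := by
    simp only [map_sub, map_add, map_mul, map_pow, aeval_X, map_ofNat]
    have := sThree_root
    push_cast
    linear_combination this
  have hint : IsIntegral ℚ sThree := ⟨_, hmonQ, hroot⟩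
  have hmin : minpoly ℚ sThree = (X ^ 4 - 2 * X ^ 3 + 4 * X - 2 : ℚ[X]) :=
    (minpoly.eq_of_irreducible_of_monic hirr hroot hmonQ).symm
  rw [IntermediateField.adjoin.finrank hint, hmin]
  compute_degree!
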